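/- If Q* ⊆ Q** are finite bounded quasisemilattices with the bqsl inclusion being a bqsl embedding, then there is a chain Q* = Q₀ ⊆ Q₁ ⊆ ... ⊆ Qₘ = Q** such that each Qᵢ is a bqsl, |Q_{i+1}| = |Qᵢ| + 1, and each inclusion Qᵢ ⊆ Q_{i+1} is a bqsl embedding. -/

import Mathlib

/-- The maximal lower bounds of `p` and `q` computed within a subset `A`. -/
def MLBin {α : Type*} [PartialOrder α] (A : Set α) (p q : α) : Set α :=
  {r | r ∈ A ∧ r ≤ p ∧ r ≤ q ∧ ∀ s ∈ A, s ≤ p → s ≤ q → r ≤ s → r = s}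

/-- A quasisemilattice: every pair of elements has finitely many maximal lower
bounds, and every common lower bound lies below one of them. -/
def IsQSL (α : Type*) [PartialOrder α] : Prop :=
  ∀ p q : α, (MLBin Set.univ p q).Finite ∧
    ∀ r : α, r ≤ p → r ≤ q → ∃ s ∈ MLBin Set.univ p q, r ≤ s

/-- `A` is a sub-bqsl of the ambient bqsl: it contains the minimum, and for each
pair of its elements the maximal lower bounds computed inside `A` coincide (in
number and identity) with those computed in the ambient structure, i.e. the
inclusion is a bqsl embedding. -/
def IsSubBqsl {α : Type*} [PartialOrder α] [OrderBot α] (A : Set α) : Prop :=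
  ⊥ ∈ A ∧ ∀ p ∈ A, ∀ q ∈ A, MLBin A p q = MLBin Set.univ p q

/-- For sub-bqsls, MLBin computed in nested sub-bqsls agree. -/
lemma mlb_sub_eq {α : Type*} [PartialOrder α] [OrderBot α] {S T : Set α}
    (hS : IsSubBqsl S) (hT : IsSubBqsl T) (hST : S ⊆ T) {p q : α}
    (hp : p ∈ S) (hq : q ∈ S) : MLBin S p q = MLBin T p q := by
  rw [hS.2 p hp q hq, hT.2 p (hST hp) q (hST hq)]

/-- Adding a minimal element of `B \ A` to `A` preserves being a sub-bqsl. -/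
lemma insert_min_subbqsl {α : Type*} [PartialOrder α] [OrderBot α] [Fintype α]
    [DecidableEq α] (hqsl : IsQSL α) {A B : Finset α} (hAB : A ⊆ B)
    (hA : IsSubBqsl (A : Set α)) (hB : IsSubBqsl (B : Set α)) {x : α}
    (hxB : x ∈ B) (hxA : x ∉ A) (hmin : ∀ y ∈ B, y < x → y ∈ A) :
    IsSubBqsl ((insert x A : Finset α) : Set α) := by
  refine ⟨by simpa using Or.inr hA.1, ?_⟩
  intro p hp q hq
  simp only [Finset.coe_insert, Set.mem_insert_iff, Finset.mem_coe] at hp hq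
  have hpB : p ∈ B := by
    rcases hp with h | h
    · exact h ▸ hxB
    · exact hAB h
  have hqB : q ∈ B := by
    rcases hq with h | h
    · exact h ▸ hxB
    · exact hAB h
  have hBeq := hB.2 p (by simpa using hpB) q (by simpa using hqB)
  have hsup : MLBin Set.univ p q ⊆ ((insert x A : Finset α) : Set α) := by
    intro r hr
    have hrB : r ∈ B := by
      rw [← hBeq] at hr
      simpa using hr.1
    simp only [Finset.coe_insert, Set.mem_insert_iff, Finset.mem_coe]
    rcases hp with hpx | hpA
    · -- p = x, so r ≤ x
      have hrx : r ≤ x := hpx ▸ hr.2.1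
      rcases eq_or_lt_of_le hrx with h | h
      · exact Or.inl h
      · exact Or.inr (hmin r hrB h)
    · rcases hq with hqx | hqA
      · have hrx : r ≤ x := hqx ▸ hr.2.2.1
        rcases eq_or_lt_of_le hrx with h | h
        · exact Or.inl h
        · exact Or.inr (hmin r hrB h)
      · -- both p, q ∈ A
        have := hA.2 p (by simpa using hpA) q (by simpa using hqA)
        rw [← this] at hr
        exact Or.inr hr.1
  ext r
  constructor
  · intro hr
    obtain ⟨s, hs, hrs⟩ := (hqsl p q).2 r hr.2.1 hr.2.2.1
    have hsA' := hsup hs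
    have : r = s := hr.2.2.2 s hsA' hs.2.1 hs.2.2.1 hrs
    exact this ▸ hs
  · intro hr
    exact ⟨hsup hr, hr.2.1, hr.2.2.1, fun s _ hsp hsq hrs =>
      hr.2.2.2 s trivial hsp hsq hrs⟩

lemma chain_aux {α : Type*} [PartialOrder α] [OrderBot α] [Fintype α]
    [DecidableEq α] (hqsl : IsQSL α) (B : Finset α) (hB : IsSubBqsl (B : Set α)) :
    ∀ n (A : Finset α), (B \ A).card = n → A ⊆ B → IsSubBqsl (A : Set α) →
    ∃ (m : ℕ) (c : ℕ → Finset α),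
      c 0 = A ∧ c m = B ∧
      (∀ i ≤ m, IsSubBqsl ((c i : Set α))) ∧
      ∀ i < m,
        c i ⊆ c (i + 1) ∧
        (c (i + 1)).card = (c i).card + 1 ∧
        ∀ p ∈ c i, ∀ q ∈ c i,
          MLBin ((c i : Set α)) p q = MLBin ((c (i + 1) : Set α)) p q := by
  intro n
  induction n with
  | zero =>
    intro A hcard hAB hA
    have hABeq : A = B := by
      have : B \ A = ∅ := Finset.card_eq_zero.mp hcard
      have hBA : B ⊆ A := fun y hy => by
        by_contra hyA
        exact absurd (Finset.mem_sdiff.mpr ⟨hy, hyA⟩) (this ▸ Finset.notMem_empty y)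
      exact le_antisymm hAB hBA
    exact ⟨0, fun _ => A, rfl, hABeq, fun i _ => hA, fun i hi => absurd hi (Nat.not_lt_zero i)⟩
  | succ n ih =>
    intro A hcard hAB hA
    have hne : (B \ A).Nonempty := Finset.card_pos.mp (hcard ▸ n.succ_pos)
    obtain ⟨x, hx, hxmin⟩ := Finset.exists_minimal hne
    have hxB : x ∈ B := (Finset.mem_sdiff.mp hx).1
    have hxA : x ∉ A := (Finset.mem_sdiff.mp hx).2
    have hmin : ∀ y ∈ B, y < x → y ∈ A := by
      intro y hyB hylt
      by_contra hyA
      exact hylt.not_ge (hxmin (Finset.mem_sdiff.mpr ⟨hyB, hyA⟩) hylt.le)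
    set A' : Finset α := insert x A with hA'def
    have hA'B : A' ⊆ B := Finset.insert_subset hxB hAB
    have hA' : IsSubBqsl ((A' : Finset α) : Set α) :=
      insert_min_subbqsl hqsl hAB hA hB hxB hxA hmin
    have hcard' : (B \ A').card = n := by
      have : B \ A' = (B \ A).erase x := by
        rw [hA'def, Finset.sdiff_insert]
      rw [this, Finset.card_erase_of_mem hx, hcard]
      rfl
    obtain ⟨m, c, hc0, hcm, hcsub, hcstep⟩ := ih A' hcard' hA'B hA'
    refine ⟨m + 1, fun i => if i = 0 then A else c (i - 1), by simp, by simp [hcm], ?_, ?_⟩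
    · intro i hi
      cases i with
      | zero => simpa using hA
      | succ j =>
        simp only [Nat.succ_ne_zero, if_false, Nat.succ_sub_one]
        exact hcsub j (Nat.lt_succ_iff.mp hi)
    · intro i hi
      cases i with
      | zero =>
        simp only [if_pos rfl, Nat.zero_add, if_neg one_ne_zero]
        have h1 : c (1 - 1) = A' := by simpa using hc0
        rw [h1]
        refine ⟨Finset.subset_insert x A, Finset.card_insert_of_notMem hxA, ?_⟩
        intro p hp q hq
        exact mlb_sub_eq hA hA' (by exact_mod_cast Finset.subset_insert x A)
          (by simpa using hp) (by simpa using hq)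
      | succ j =>
        have hj : j < m := Nat.lt_of_succ_lt_succ hi
        simp only [Nat.succ_ne_zero, if_false, Nat.succ_sub_one]
        obtain ⟨h1, h2, h3⟩ := hcstep j hj
        exact ⟨h1, h2, h3⟩

/-- If `Q* ⊆ Q**` are finite sub-bqsls (with the inclusions being bqsl
embeddings), then there is a chain `Q* = Q₀ ⊆ Q₁ ⊆ ⋯ ⊆ Qₘ = Q**` of sub-bqsls
with `|Q_{i+1}| = |Q_i| + 1` in which each inclusion is a bqsl embedding. -/
theorem stmt_2 {α : Type*} [PartialOrder α] [OrderBot α] [Fintype α]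
    [DecidableEq α] (hqsl : IsQSL α) (A B : Finset α) (hAB : A ⊆ B)
    (hA : IsSubBqsl (A : Set α)) (hB : IsSubBqsl (B : Set α)) :
    ∃ (m : ℕ) (c : ℕ → Finset α),
      c 0 = A ∧ c m = B ∧
      (∀ i ≤ m, IsSubBqsl ((c i : Set α))) ∧
      ∀ i < m,
        c i ⊆ c (i + 1) ∧
        (c (i + 1)).card = (c i).card + 1 ∧
        -- the inclusion `c i ⊆ c (i+1)` is a bqsl embedding
        ∀ p ∈ c i, ∀ q ∈ c i,
          MLBin ((c i : Set α)) p q = MLBin ((c (i + 1) : Set α)) p q := by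
  obtain ⟨m, c, h⟩ := chain_aux hqsl B hB (B \ A).card A rfl hAB hA
  exact ⟨m, c, h⟩
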